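/- Let α, β, v ∈ ℝ with β ≠ 0. On the open set U = {(S,I,R) ∈ ℝ³ : β·S + v > 0}, define the skew-symmetric matrix-valued map π₂ with entries π₂_{SI} = −β·S·I − v·I, π₂_{SR} = β·S·I + v·I, π₂_{IR} = −β·S·I − v·I, and the Hamiltonian H₂(S,I,R) = −(R + ((α+v)/β)·log(β·S + v)). Then (i) π₂ satisfies the Jacobi identity on U; (ii) for all (S,I,R) ∈ U, π₂·∇H₂ = (−β·S·I − v·I, β·S·I − α·I, α·I + v·I), the vector field of the SIR model with vaccination rate v·I; and (iii) the sum of π₂ with the first structure π₁ (entries π₁_{SI} = 0, π₁_{SR} = −β·S·I − v·I, π₁_{IR} = β·S·I − α·I) also satisfies the Jacobi identity, so the two structures are compatible. -/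

import Mathlib

/-- A pointwise skew-symmetric matrix-valued map satisfies the Jacobi identity on a set `U`
if for all `x ∈ U` and indices `i j k`,
`∑ l, (P_{l i}(x)·∂_l P_{j k}(x) + P_{l j}(x)·∂_l P_{k i}(x) + P_{l k}(x)·∂_l P_{i j}(x)) = 0`. -/
def JacobiIdentityOn {n : Type*} [Fintype n] [DecidableEq n]
    (P : (n → ℝ) → Matrix n n ℝ) (U : Set (n → ℝ)) : Prop :=
  ∀ x ∈ U, ∀ i j k : n,
    ∑ l : n,
      (P x l i * fderiv ℝ (fun y => P y j k) x (Pi.single l 1) +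
        P x l j * fderiv ℝ (fun y => P y k i) x (Pi.single l 1) +
        P x l k * fderiv ℝ (fun y => P y i j) x (Pi.single l 1)) = 0

/-- The Hamiltonian vector field `π(x)·∇H(x)` of a matrix-valued map `P` and Hamiltonian `H`. -/
noncomputable def hamVF {n : Type*} [Fintype n] [DecidableEq n]
    (P : (n → ℝ) → Matrix n n ℝ) (H : (n → ℝ) → ℝ) (x : n → ℝ) : n → ℝ :=
  (P x).mulVec fun j => fderiv ℝ H x (Pi.single j 1)

/-- The second Poisson structure of the SIR model with vaccination rate `v·I`, on coordinates
`(S,I,R) = (x 0, x 1, x 2)`: `π₂_{SI} = −β·S·I − v·I`, `π₂_{SR} = β·S·I + v·I`,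
`π₂_{IR} = −β·S·I − v·I`. -/
noncomputable def sirVaccIPoisson2 (β v : ℝ) (x : Fin 3 → ℝ) : Matrix (Fin 3) (Fin 3) ℝ :=
  Matrix.of
    ![![0, -β * x 0 * x 1 - v * x 1, β * x 0 * x 1 + v * x 1],
      ![-(-β * x 0 * x 1 - v * x 1), 0, -β * x 0 * x 1 - v * x 1],
      ![-(β * x 0 * x 1 + v * x 1), -(-β * x 0 * x 1 - v * x 1), 0]]

/-- The first Poisson structure of the SIR model with vaccination rate `v·I`:
`π₁_{SI} = 0`, `π₁_{SR} = −β·S·I − v·I`, `π₁_{IR} = β·S·I − α·I`. -/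
noncomputable def sirVaccIPoisson1 (α β v : ℝ) (x : Fin 3 → ℝ) : Matrix (Fin 3) (Fin 3) ℝ :=
  Matrix.of
    ![![0, 0, -β * x 0 * x 1 - v * x 1],
      ![0, 0, β * x 0 * x 1 - α * x 1],
      ![-(-β * x 0 * x 1 - v * x 1), -(β * x 0 * x 1 - α * x 1), 0]]

lemma hasFDerivAt_quad (a b : ℝ) (x : Fin 3 → ℝ) :
    HasFDerivAt (fun y : Fin 3 → ℝ => a * y 0 * y 1 + b * y 1)
      ((a * x 1) • ContinuousLinearMap.proj (R := ℝ) (φ := fun _ : Fin 3 => ℝ) 0 +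
        (a * x 0 + b) • ContinuousLinearMap.proj (R := ℝ) (φ := fun _ : Fin 3 => ℝ) 1) x := by
  have h0 : HasFDerivAt (fun y : Fin 3 → ℝ => y 0)
      (ContinuousLinearMap.proj (R := ℝ) (φ := fun _ : Fin 3 => ℝ) 0) x :=
    (ContinuousLinearMap.proj (R := ℝ) (φ := fun _ : Fin 3 => ℝ) 0).hasFDerivAt
  have h1 : HasFDerivAt (fun y : Fin 3 → ℝ => y 1)
      (ContinuousLinearMap.proj (R := ℝ) (φ := fun _ : Fin 3 => ℝ) 1) x :=
    (ContinuousLinearMap.proj (R := ℝ) (φ := fun _ : Fin 3 => ℝ) 1).hasFDerivAt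
  have h : HasFDerivAt (fun y : Fin 3 → ℝ => a * y 0 * y 1 + b * y 1) _ x :=
    ((h0.const_mul a).mul h1).add (h1.const_mul b)
  refine h.congr_fderiv ?_
  ext w : 1
  simp [ContinuousLinearMap.proj_apply]
  ring

lemma fderiv_quad (a b : ℝ) (x : Fin 3 → ℝ) (l : Fin 3) :
    fderiv ℝ (fun y : Fin 3 → ℝ => a * y 0 * y 1 + b * y 1) x (Pi.single l 1) =
      ![a * x 1, a * x 0 + b, 0] l := by
  rw [(hasFDerivAt_quad a b x).fderiv]
  fin_cases l <;>
    simp [ContinuousLinearMap.proj_apply, Pi.single_apply]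

lemma fd2_0_0 (β v : ℝ) (x : Fin 3 → ℝ) (l : Fin 3) :
    fderiv ℝ (fun y : Fin 3 → ℝ => sirVaccIPoisson2 β v y 0 0) x (Pi.single l 1) =
      ![(0:ℝ) * x 1, (0:ℝ) * x 0 + (0:ℝ), 0] l := by
  have h : (fun y : Fin 3 → ℝ => sirVaccIPoisson2 β v y 0 0) =
      fun y => (0:ℝ) * y 0 * y 1 + (0:ℝ) * y 1 := by
    funext y; simp [sirVaccIPoisson2]; try ring
  rw [h, fderiv_quad]

lemma fd2_0_1 (β v : ℝ) (x : Fin 3 → ℝ) (l : Fin 3) :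
    fderiv ℝ (fun y : Fin 3 → ℝ => sirVaccIPoisson2 β v y 0 1) x (Pi.single l 1) =
      ![(-β) * x 1, (-β) * x 0 + (-v), 0] l := by
  have h : (fun y : Fin 3 → ℝ => sirVaccIPoisson2 β v y 0 1) =
      fun y => (-β) * y 0 * y 1 + (-v) * y 1 := by
    funext y; simp [sirVaccIPoisson2]; try ring
  rw [h, fderiv_quad]

lemma fd2_0_2 (β v : ℝ) (x : Fin 3 → ℝ) (l : Fin 3) :
    fderiv ℝ (fun y : Fin 3 → ℝ => sirVaccIPoisson2 β v y 0 2) x (Pi.single l 1) =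
      ![β * x 1, β * x 0 + v, 0] l := by
  have h : (fun y : Fin 3 → ℝ => sirVaccIPoisson2 β v y 0 2) =
      fun y => β * y 0 * y 1 + v * y 1 := by
    funext y; simp [sirVaccIPoisson2]; try ring
  rw [h, fderiv_quad]

lemma fd2_1_0 (β v : ℝ) (x : Fin 3 → ℝ) (l : Fin 3) :
    fderiv ℝ (fun y : Fin 3 → ℝ => sirVaccIPoisson2 β v y 1 0) x (Pi.single l 1) =
      ![β * x 1, β * x 0 + v, 0] l := by
  have h : (fun y : Fin 3 → ℝ => sirVaccIPoisson2 β v y 1 0) =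
      fun y => β * y 0 * y 1 + v * y 1 := by
    funext y; simp [sirVaccIPoisson2]; try ring
  rw [h, fderiv_quad]

lemma fd2_1_1 (β v : ℝ) (x : Fin 3 → ℝ) (l : Fin 3) :
    fderiv ℝ (fun y : Fin 3 → ℝ => sirVaccIPoisson2 β v y 1 1) x (Pi.single l 1) =
      ![(0:ℝ) * x 1, (0:ℝ) * x 0 + (0:ℝ), 0] l := by
  have h : (fun y : Fin 3 → ℝ => sirVaccIPoisson2 β v y 1 1) =
      fun y => (0:ℝ) * y 0 * y 1 + (0:ℝ) * y 1 := by
    funext y; simp [sirVaccIPoisson2]; try ring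
  rw [h, fderiv_quad]

lemma fd2_1_2 (β v : ℝ) (x : Fin 3 → ℝ) (l : Fin 3) :
    fderiv ℝ (fun y : Fin 3 → ℝ => sirVaccIPoisson2 β v y 1 2) x (Pi.single l 1) =
      ![(-β) * x 1, (-β) * x 0 + (-v), 0] l := by
  have h : (fun y : Fin 3 → ℝ => sirVaccIPoisson2 β v y 1 2) =
      fun y => (-β) * y 0 * y 1 + (-v) * y 1 := by
    funext y; simp [sirVaccIPoisson2]; try ring
  rw [h, fderiv_quad]

lemma fd2_2_0 (β v : ℝ) (x : Fin 3 → ℝ) (l : Fin 3) :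
    fderiv ℝ (fun y : Fin 3 → ℝ => sirVaccIPoisson2 β v y 2 0) x (Pi.single l 1) =
      ![(-β) * x 1, (-β) * x 0 + (-v), 0] l := by
  have h : (fun y : Fin 3 → ℝ => sirVaccIPoisson2 β v y 2 0) =
      fun y => (-β) * y 0 * y 1 + (-v) * y 1 := by
    funext y; simp [sirVaccIPoisson2]; try ring
  rw [h, fderiv_quad]

lemma fd2_2_1 (β v : ℝ) (x : Fin 3 → ℝ) (l : Fin 3) :
    fderiv ℝ (fun y : Fin 3 → ℝ => sirVaccIPoisson2 β v y 2 1) x (Pi.single l 1) =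
      ![β * x 1, β * x 0 + v, 0] l := by
  have h : (fun y : Fin 3 → ℝ => sirVaccIPoisson2 β v y 2 1) =
      fun y => β * y 0 * y 1 + v * y 1 := by
    funext y; simp [sirVaccIPoisson2]; try ring
  rw [h, fderiv_quad]

lemma fd2_2_2 (β v : ℝ) (x : Fin 3 → ℝ) (l : Fin 3) :
    fderiv ℝ (fun y : Fin 3 → ℝ => sirVaccIPoisson2 β v y 2 2) x (Pi.single l 1) =
      ![(0:ℝ) * x 1, (0:ℝ) * x 0 + (0:ℝ), 0] l := by
  have h : (fun y : Fin 3 → ℝ => sirVaccIPoisson2 β v y 2 2) =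
      fun y => (0:ℝ) * y 0 * y 1 + (0:ℝ) * y 1 := by
    funext y; simp [sirVaccIPoisson2]; try ring
  rw [h, fderiv_quad]

lemma fds_0_0 (α β v : ℝ) (x : Fin 3 → ℝ) (l : Fin 3) :
    fderiv ℝ (fun y : Fin 3 → ℝ => (sirVaccIPoisson1 α β v y + sirVaccIPoisson2 β v y) 0 0) x
      (Pi.single l 1) = ![(0:ℝ) * x 1, (0:ℝ) * x 0 + (0:ℝ), 0] l := by
  have h : (fun y : Fin 3 → ℝ => (sirVaccIPoisson1 α β v y + sirVaccIPoisson2 β v y) 0 0) =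
      fun y => (0:ℝ) * y 0 * y 1 + (0:ℝ) * y 1 := by
    funext y; simp [sirVaccIPoisson1, sirVaccIPoisson2, Matrix.add_apply]; try ring
  rw [h, fderiv_quad]

lemma fds_0_1 (α β v : ℝ) (x : Fin 3 → ℝ) (l : Fin 3) :
    fderiv ℝ (fun y : Fin 3 → ℝ => (sirVaccIPoisson1 α β v y + sirVaccIPoisson2 β v y) 0 1) x
      (Pi.single l 1) = ![(-β) * x 1, (-β) * x 0 + (-v), 0] l := by
  have h : (fun y : Fin 3 → ℝ => (sirVaccIPoisson1 α β v y + sirVaccIPoisson2 β v y) 0 1) =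
      fun y => (-β) * y 0 * y 1 + (-v) * y 1 := by
    funext y; simp [sirVaccIPoisson1, sirVaccIPoisson2, Matrix.add_apply]; try ring
  rw [h, fderiv_quad]

lemma fds_0_2 (α β v : ℝ) (x : Fin 3 → ℝ) (l : Fin 3) :
    fderiv ℝ (fun y : Fin 3 → ℝ => (sirVaccIPoisson1 α β v y + sirVaccIPoisson2 β v y) 0 2) x
      (Pi.single l 1) = ![(0:ℝ) * x 1, (0:ℝ) * x 0 + (0:ℝ), 0] l := by
  have h : (fun y : Fin 3 → ℝ => (sirVaccIPoisson1 α β v y + sirVaccIPoisson2 β v y) 0 2) =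
      fun y => (0:ℝ) * y 0 * y 1 + (0:ℝ) * y 1 := by
    funext y; simp [sirVaccIPoisson1, sirVaccIPoisson2, Matrix.add_apply]; try ring
  rw [h, fderiv_quad]

lemma fds_1_0 (α β v : ℝ) (x : Fin 3 → ℝ) (l : Fin 3) :
    fderiv ℝ (fun y : Fin 3 → ℝ => (sirVaccIPoisson1 α β v y + sirVaccIPoisson2 β v y) 1 0) x
      (Pi.single l 1) = ![β * x 1, β * x 0 + v, 0] l := by
  have h : (fun y : Fin 3 → ℝ => (sirVaccIPoisson1 α β v y + sirVaccIPoisson2 β v y) 1 0) =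
      fun y => β * y 0 * y 1 + v * y 1 := by
    funext y; simp [sirVaccIPoisson1, sirVaccIPoisson2, Matrix.add_apply]; try ring
  rw [h, fderiv_quad]

lemma fds_1_1 (α β v : ℝ) (x : Fin 3 → ℝ) (l : Fin 3) :
    fderiv ℝ (fun y : Fin 3 → ℝ => (sirVaccIPoisson1 α β v y + sirVaccIPoisson2 β v y) 1 1) x
      (Pi.single l 1) = ![(0:ℝ) * x 1, (0:ℝ) * x 0 + (0:ℝ), 0] l := by
  have h : (fun y : Fin 3 → ℝ => (sirVaccIPoisson1 α β v y + sirVaccIPoisson2 β v y) 1 1) =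
      fun y => (0:ℝ) * y 0 * y 1 + (0:ℝ) * y 1 := by
    funext y; simp [sirVaccIPoisson1, sirVaccIPoisson2, Matrix.add_apply]; try ring
  rw [h, fderiv_quad]

lemma fds_1_2 (α β v : ℝ) (x : Fin 3 → ℝ) (l : Fin 3) :
    fderiv ℝ (fun y : Fin 3 → ℝ => (sirVaccIPoisson1 α β v y + sirVaccIPoisson2 β v y) 1 2) x
      (Pi.single l 1) = ![(0:ℝ) * x 1, (0:ℝ) * x 0 + (-(α+v)), 0] l := by
  have h : (fun y : Fin 3 → ℝ => (sirVaccIPoisson1 α β v y + sirVaccIPoisson2 β v y) 1 2) =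
      fun y => (0:ℝ) * y 0 * y 1 + (-(α+v)) * y 1 := by
    funext y; simp [sirVaccIPoisson1, sirVaccIPoisson2, Matrix.add_apply]; try ring
  rw [h, fderiv_quad]

lemma fds_2_0 (α β v : ℝ) (x : Fin 3 → ℝ) (l : Fin 3) :
    fderiv ℝ (fun y : Fin 3 → ℝ => (sirVaccIPoisson1 α β v y + sirVaccIPoisson2 β v y) 2 0) x
      (Pi.single l 1) = ![(0:ℝ) * x 1, (0:ℝ) * x 0 + (0:ℝ), 0] l := by
  have h : (fun y : Fin 3 → ℝ => (sirVaccIPoisson1 α β v y + sirVaccIPoisson2 β v y) 2 0) =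
      fun y => (0:ℝ) * y 0 * y 1 + (0:ℝ) * y 1 := by
    funext y; simp [sirVaccIPoisson1, sirVaccIPoisson2, Matrix.add_apply]; try ring
  rw [h, fderiv_quad]

lemma fds_2_1 (α β v : ℝ) (x : Fin 3 → ℝ) (l : Fin 3) :
    fderiv ℝ (fun y : Fin 3 → ℝ => (sirVaccIPoisson1 α β v y + sirVaccIPoisson2 β v y) 2 1) x
      (Pi.single l 1) = ![(0:ℝ) * x 1, (0:ℝ) * x 0 + (α+v), 0] l := by
  have h : (fun y : Fin 3 → ℝ => (sirVaccIPoisson1 α β v y + sirVaccIPoisson2 β v y) 2 1) =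
      fun y => (0:ℝ) * y 0 * y 1 + (α+v) * y 1 := by
    funext y; simp [sirVaccIPoisson1, sirVaccIPoisson2, Matrix.add_apply]; try ring
  rw [h, fderiv_quad]

lemma fds_2_2 (α β v : ℝ) (x : Fin 3 → ℝ) (l : Fin 3) :
    fderiv ℝ (fun y : Fin 3 → ℝ => (sirVaccIPoisson1 α β v y + sirVaccIPoisson2 β v y) 2 2) x
      (Pi.single l 1) = ![(0:ℝ) * x 1, (0:ℝ) * x 0 + (0:ℝ), 0] l := by
  have h : (fun y : Fin 3 → ℝ => (sirVaccIPoisson1 α β v y + sirVaccIPoisson2 β v y) 2 2) =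
      fun y => (0:ℝ) * y 0 * y 1 + (0:ℝ) * y 1 := by
    funext y; simp [sirVaccIPoisson1, sirVaccIPoisson2, Matrix.add_apply]; try ring
  rw [h, fderiv_quad]

lemma fderiv_H (α β v : ℝ) (x : Fin 3 → ℝ) (hx : β * x 0 + v > 0) (j : Fin 3) :
    fderiv ℝ (fun y : Fin 3 → ℝ => -(y 2 + (α + v) / β * Real.log (β * y 0 + v))) x
      (Pi.single j 1) = ![-((α + v) / β * ((β * x 0 + v)⁻¹ * β)), 0, -1] j := by
  have h0 : HasFDerivAt (fun y : Fin 3 → ℝ => y 0)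
      (ContinuousLinearMap.proj (R := ℝ) (φ := fun _ : Fin 3 => ℝ) 0) x :=
    (ContinuousLinearMap.proj (R := ℝ) (φ := fun _ : Fin 3 => ℝ) 0).hasFDerivAt
  have h2 : HasFDerivAt (fun y : Fin 3 → ℝ => y 2)
      (ContinuousLinearMap.proj (R := ℝ) (φ := fun _ : Fin 3 => ℝ) 2) x :=
    (ContinuousLinearMap.proj (R := ℝ) (φ := fun _ : Fin 3 => ℝ) 2).hasFDerivAt
  have hg : HasFDerivAt (fun y : Fin 3 → ℝ => β * y 0 + v)
      (β • ContinuousLinearMap.proj (R := ℝ) (φ := fun _ : Fin 3 => ℝ) 0) x :=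
    (h0.const_mul β).add_const v
  have hlog := hg.log (ne_of_gt hx)
  have hH : HasFDerivAt (fun y : Fin 3 → ℝ => -(y 2 + (α + v) / β * Real.log (β * y 0 + v))) _ x :=
    (h2.add (hlog.const_mul ((α + v) / β))).neg
  rw [hH.fderiv]
  fin_cases j <;>
    simp [ContinuousLinearMap.proj_apply, Pi.single_apply] <;> ring


lemma fin3_mk0 (h : 0 < 3) : (⟨0, h⟩ : Fin 3) = 0 := rfl
lemma fin3_mk1 (h : 1 < 3) : (⟨1, h⟩ : Fin 3) = 1 := rfl
lemma fin3_mk2 (h : 2 < 3) : (⟨2, h⟩ : Fin 3) = 2 := rfl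


set_option maxHeartbeats 1600000 in
/-- On `U = {(S,I,R) : β·S + v > 0}`: (i) `π₂` satisfies the Jacobi identity; (ii) with the
Hamiltonian `H₂ = −(R + ((α+v)/β)·log(β·S + v))` the Hamiltonian vector field of `π₂` is the
vector field `(−β·S·I − v·I, β·S·I − α·I, α·I + v·I)` of the SIR model with vaccination rate
`v·I`; (iii) `π₁ + π₂` also satisfies the Jacobi identity, so the two structures are
compatible. -/
theorem sirVaccinationI_biHamiltonian (α β v : ℝ) (hβ : β ≠ 0) :
    JacobiIdentityOn (sirVaccIPoisson2 β v) {x : Fin 3 → ℝ | β * x 0 + v > 0} ∧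
    (∀ x : Fin 3 → ℝ, β * x 0 + v > 0 →
      hamVF (sirVaccIPoisson2 β v)
          (fun y => -(y 2 + (α + v) / β * Real.log (β * y 0 + v))) x =
        ![-β * x 0 * x 1 - v * x 1, β * x 0 * x 1 - α * x 1, α * x 1 + v * x 1]) ∧
    JacobiIdentityOn (fun x => sirVaccIPoisson1 α β v x + sirVaccIPoisson2 β v x)
      {x : Fin 3 → ℝ | β * x 0 + v > 0} := by
  refine ⟨?_, ?_, ?_⟩
  · intro x hx i j k
    fin_cases i <;> fin_cases j <;> fin_cases k <;>
      (beta_reduce;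
       simp only [fin3_mk0, fin3_mk1, fin3_mk2, Fin.isValue, Fin.sum_univ_three, fd2_0_0, fd2_0_1, fd2_0_2, fd2_1_0,
        fd2_1_1, fd2_1_2, fd2_2_0, fd2_2_1, fd2_2_2];
       simp [sirVaccIPoisson2];
       try ring)
  · intro x hx
    have hne : β * x 0 + v ≠ 0 := ne_of_gt hx
    funext i
    fin_cases i <;>
      (simp only [hamVF, fderiv_H α β v x hx];
       simp [Matrix.mulVec, dotProduct, Fin.sum_univ_three, sirVaccIPoisson2,
         fin3_mk0, fin3_mk1, fin3_mk2];
       try field_simp;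
       try ring)
  · intro x hx i j k
    fin_cases i <;> fin_cases j <;> fin_cases k <;>
      (beta_reduce;
       simp only [fin3_mk0, fin3_mk1, fin3_mk2, Fin.isValue, Fin.sum_univ_three, fds_0_0, fds_0_1, fds_0_2, fds_1_0,
        fds_1_1, fds_1_2, fds_2_0, fds_2_1, fds_2_2];
       simp [sirVaccIPoisson1, sirVaccIPoisson2, Matrix.add_apply];
       try ring)
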